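/- Let α ∈ (0,1) and let l ∈ ℕ. Then there exist a real constant c and a function g that is infinitely differentiable on [0,∞) such that, for all y > 0, ∫_{10}^{∞} e^{−yτ} τ^{−α−l} dτ = c · y^{l+α−1} + g(y). -/

import Mathlib

open MeasureTheory Set Real Filter Topology

namespace Stmt11Aux

variable {α : ℝ}

/-- The integrand family over `(0,10]`. -/
noncomputable def G (α : ℝ) (m : ℕ) (y : ℝ) : ℝ :=
  ∫ τ in Set.Ioc (0:ℝ) 10, (-τ) ^ m * Real.exp (-(y * τ)) * τ ^ (-α)

lemma measIoc (α y : ℝ) (m : ℕ) :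
    AEStronglyMeasurable (fun τ : ℝ => (-τ) ^ m * Real.exp (-(y * τ)) * τ ^ (-α))
      (volume.restrict (Set.Ioc (0:ℝ) 10)) := by
  apply ContinuousOn.aestronglyMeasurable ?_ measurableSet_Ioc
  apply ContinuousOn.mul
  · exact Continuous.continuousOn (by continuity)
  · exact continuousOn_id.rpow_const fun x hx => Or.inl (ne_of_gt hx.1)

lemma boundIoc (α : ℝ) (hα0 : 0 < α) (m : ℕ) (y₀ : ℝ) :
    ∀ τ ∈ Set.Ioc (0:ℝ) 10, ∀ y ∈ Metric.ball y₀ 1,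
      ‖(-τ) ^ m * Real.exp (-(y * τ)) * τ ^ (-α)‖
        ≤ (10:ℝ) ^ m * Real.exp (10 * (|y₀| + 1)) * τ ^ (-α) := by
  intro τ hτ y hy
  have hτ0 : 0 < τ := hτ.1
  have h1 : ‖(-τ) ^ m * Real.exp (-(y * τ)) * τ ^ (-α)‖
      = τ ^ m * Real.exp (-(y * τ)) * τ ^ (-α) := by
    rw [norm_mul, norm_mul, norm_pow, norm_neg, Real.norm_eq_abs, Real.norm_eq_abs,
      Real.norm_eq_abs, abs_of_pos hτ0, abs_of_pos (Real.exp_pos _),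
      abs_of_nonneg (Real.rpow_nonneg hτ0.le _)]
  rw [h1]
  have hy1 : |y| ≤ |y₀| + 1 := by
    have := mem_ball_iff_norm.mp hy
    have : |y - y₀| < 1 := by rwa [Real.norm_eq_abs] at this
    have h := abs_sub_abs_le_abs_sub y y₀
    linarith
  have h2 : τ ^ m ≤ (10:ℝ) ^ m := pow_le_pow_left₀ hτ0.le hτ.2 m
  have h3 : Real.exp (-(y * τ)) ≤ Real.exp (10 * (|y₀| + 1)) := by
    apply Real.exp_le_exp.mpr
    have : -(y * τ) ≤ |y| * τ := by
      have := neg_abs_le (y * τ)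
      have : -(y*τ) ≤ |y*τ| := neg_le_of_neg_le (by simpa using neg_abs_le (y*τ))
      calc -(y*τ) ≤ |y*τ| := this
        _ = |y| * τ := by rw [abs_mul, abs_of_pos hτ0]
    calc -(y * τ) ≤ |y| * τ := this
      _ ≤ (|y₀| + 1) * 10 := by
          apply mul_le_mul hy1 hτ.2 hτ0.le (by positivity)
      _ = 10 * (|y₀| + 1) := by ring
  have h4 : (0:ℝ) ≤ τ ^ (-α) := Real.rpow_nonneg hτ0.le _
  calc τ ^ m * Real.exp (-(y * τ)) * τ ^ (-α)
      ≤ (10:ℝ) ^ m * Real.exp (10 * (|y₀| + 1)) * τ ^ (-α) := by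
        apply mul_le_mul_of_nonneg_right _ h4
        exact mul_le_mul h2 h3 (Real.exp_pos _).le (by positivity)

lemma rpow_integrableIoc (α : ℝ) (hα1 : α < 1) :
    IntegrableOn (fun τ : ℝ => τ ^ (-α)) (Set.Ioc (0:ℝ) 10) := by
  have := intervalIntegral.intervalIntegrable_rpow' (a := 0) (b := 10) (r := -α) (by linarith)
  rwa [intervalIntegrable_iff_integrableOn_Ioc_of_le (by norm_num)] at this

lemma intIoc (hα0 : 0 < α) (hα1 : α < 1) (m : ℕ) (y : ℝ) :
    IntegrableOn (fun τ : ℝ => (-τ) ^ m * Real.exp (-(y * τ)) * τ ^ (-α))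
      (Set.Ioc (0:ℝ) 10) := by
  apply Integrable.mono' (((rpow_integrableIoc α hα1).const_mul
    ((10:ℝ) ^ m * Real.exp (10 * (|y| + 1))))) (measIoc α y m)
  filter_upwards [self_mem_ae_restrict measurableSet_Ioc] with τ hτ
  exact boundIoc α hα0 m y τ hτ y (Metric.mem_ball_self one_pos)

lemma G_hasDerivAt (hα0 : 0 < α) (hα1 : α < 1) (m : ℕ) (y₀ : ℝ) :
    HasDerivAt (G α m) (G α (m+1) y₀) y₀ := by
  have key := hasDerivAt_integral_of_dominated_loc_of_deriv_le
    (μ := volume.restrict (Set.Ioc (0:ℝ) 10)) (x₀ := y₀)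
    (F := fun y τ => (-τ) ^ m * Real.exp (-(y * τ)) * τ ^ (-α))
    (F' := fun y τ => (-τ) ^ (m+1) * Real.exp (-(y * τ)) * τ ^ (-α))
    (bound := fun τ => (10:ℝ) ^ (m+1) * Real.exp (10 * (|y₀| + 1)) * τ ^ (-α))
    (Metric.ball_mem_nhds y₀ one_pos)
    (Eventually.of_forall fun y => measIoc α y m)
    (intIoc hα0 hα1 m y₀)
    (measIoc α y₀ (m+1))
    ?_ ?_ ?_
  · exact key.2
  · filter_upwards [self_mem_ae_restrict measurableSet_Ioc] with τ hτ
    intro y hy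
    exact boundIoc α hα0 (m+1) y₀ τ hτ y hy
  · exact ((rpow_integrableIoc α hα1).const_mul _)
  · filter_upwards [self_mem_ae_restrict measurableSet_Ioc] with τ hτ
    intro y hy
    have h1 : HasDerivAt (fun y : ℝ => -(y * τ)) (-τ) y := (hasDerivAt_mul_const τ).neg
    have h2 := h1.exp
    have h3 := (h2.const_mul ((-τ) ^ m)).mul_const (τ ^ (-α))
    refine h3.congr_deriv ?_
    rw [pow_succ]
    ring

lemma G_contDiff (hα0 : 0 < α) (hα1 : α < 1) (m : ℕ) :
    ContDiff ℝ (⊤ : ℕ∞) (G α m) := by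
  have key : ∀ n : ℕ, ∀ m : ℕ, ContDiff ℝ (n : ℕ) (G α m) := by
    intro n
    induction n with
    | zero =>
      intro m
      rw [Nat.cast_zero, contDiff_zero]
      exact continuous_iff_continuousAt.mpr
        fun y => (G_hasDerivAt hα0 hα1 m y).continuousAt
    | succ n ih =>
      intro m
      have : ((n+1 : ℕ) : WithTop ℕ∞) = (n : WithTop ℕ∞) + 1 := by push_cast; rfl
      rw [this, contDiff_succ_iff_deriv]
      refine ⟨fun y => (G_hasDerivAt hα0 hα1 m y).differentiableAt, ?_, ?_⟩
      · intro h; simp at h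
      · have : deriv (G α m) = G α (m+1) :=
          funext fun y => (G_hasDerivAt hα0 hα1 m y).deriv
        rw [this]; exact ih (m+1)
  exact contDiff_infty.mpr fun n => key n m

section B
variable {α : ℝ}

lemma measIoi (y p : ℝ) :
    AEStronglyMeasurable (fun τ : ℝ => Real.exp (-(y * τ)) * τ ^ p)
      (volume.restrict (Set.Ioi (10:ℝ))) := by
  apply ContinuousOn.aestronglyMeasurable ?_ measurableSet_Ioi
  apply ContinuousOn.mul
  · exact Continuous.continuousOn (by continuity)
  · exact continuousOn_id.rpow_const fun x hx => Or.inl (by rw [mem_Ioi] at hx; simp only [id_eq]; exact ne_of_gt (by linarith))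

lemma intIoi {y : ℝ} (hy : 0 < y) {p : ℝ} (hp : p ≤ 0) :
    IntegrableOn (fun τ : ℝ => Real.exp (-(y * τ)) * τ ^ p) (Set.Ioi (10:ℝ)) := by
  have hg : IntegrableOn (fun τ : ℝ => (10:ℝ) ^ p * Real.exp (-y * τ)) (Set.Ioi (10:ℝ)) :=
    (exp_neg_integrableOn_Ioi 10 hy).const_mul _
  apply Integrable.mono' hg (measIoi y p)
  filter_upwards [self_mem_ae_restrict measurableSet_Ioi] with τ hτ
  rw [mem_Ioi] at hτ
  have hτ0 : (0:ℝ) < τ := by linarith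
  have h1 : ‖Real.exp (-(y * τ)) * τ ^ p‖ = Real.exp (-(y * τ)) * τ ^ p := by
    rw [norm_mul, Real.norm_eq_abs, Real.norm_eq_abs, abs_of_pos (Real.exp_pos _),
      abs_of_nonneg (Real.rpow_nonneg hτ0.le _)]
  rw [h1]
  have h2 : τ ^ p ≤ (10:ℝ) ^ p :=
    Real.rpow_le_rpow_of_nonpos (by norm_num) hτ.le hp
  calc Real.exp (-(y * τ)) * τ ^ p ≤ Real.exp (-(y * τ)) * (10:ℝ) ^ p := by
        exact mul_le_mul_of_nonneg_left h2 (Real.exp_pos _).le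
    _ = (10:ℝ) ^ p * Real.exp (-y * τ) := by rw [neg_mul]; ring

lemma gammaIdent (hα0 : 0 < α) (hα1 : α < 1) {y : ℝ} (hy : 0 < y) :
    ∫ τ in Set.Ioi (0:ℝ), Real.exp (-(y * τ)) * τ ^ (-α)
      = Real.Gamma (1 - α) * y ^ (α - 1) := by
  have h := integral_comp_mul_left_Ioi (fun x : ℝ => Real.exp (-x) * x ^ (-α)) 0 hy
  rw [mul_zero] at h
  have hG : ∫ x in Set.Ioi (0:ℝ), Real.exp (-x) * x ^ (-α) = Real.Gamma (1 - α) := by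
    rw [Real.Gamma_eq_integral (by linarith)]
    norm_num
  rw [hG] at h
  have h2 : ∫ x in Set.Ioi (0:ℝ), Real.exp (-(y * x)) * (y * x) ^ (-α)
      = ∫ x in Set.Ioi (0:ℝ), y ^ (-α) * (Real.exp (-(y * x)) * x ^ (-α)) := by
    apply setIntegral_congr_fun measurableSet_Ioi
    intro x hx
    rw [mem_Ioi] at hx
    show Real.exp (-(y * x)) * (y * x) ^ (-α) = _
    rw [Real.mul_rpow hy.le hx.le]
    ring
  rw [h2, integral_const_mul] at h
  have hneg : y ^ (-α) = (y ^ α)⁻¹ := Real.rpow_neg hy.le α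
  rw [hneg, smul_eq_mul] at h
  have hyα : (0:ℝ) < y ^ α := Real.rpow_pos_of_pos hy α
  rw [Real.rpow_sub hy, Real.rpow_one]
  field_simp at h ⊢
  linear_combination h

end B


lemma main (α : ℝ) (hα0 : 0 < α) (hα1 : α < 1) : ∀ l : ℕ,
    ∃ (c : ℝ) (g : ℝ → ℝ),
      ContDiffOn ℝ (⊤ : ℕ∞) g (Set.Ici 0) ∧
      ∀ y : ℝ, 0 < y →
        (∫ τ in Set.Ioi (10 : ℝ), Real.exp (-(y * τ)) * τ ^ (-α - (l : ℝ)))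
          = c * y ^ ((l : ℝ) + α - 1) + g y := by
  intro l
  induction l with
  | zero =>
    refine ⟨Real.Gamma (1 - α), fun y => -(G α 0 y),
      ((G_contDiff hα0 hα1 0).neg).contDiffOn, ?_⟩
    intro y hy
    have hG0 : G α 0 y = ∫ τ in Set.Ioc (0:ℝ) 10, Real.exp (-(y * τ)) * τ ^ (-α) := by
      simp only [G, pow_zero, one_mul]
    have hIoc : IntegrableOn (fun τ : ℝ => Real.exp (-(y * τ)) * τ ^ (-α))
        (Set.Ioc (0:ℝ) 10) := by
      have := intIoc hα0 hα1 0 y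
      simpa only [pow_zero, one_mul] using this
    have hsplit : (∫ τ in Set.Ioi (0:ℝ), Real.exp (-(y * τ)) * τ ^ (-α))
        = (∫ τ in Set.Ioc (0:ℝ) 10, Real.exp (-(y * τ)) * τ ^ (-α))
          + ∫ τ in Set.Ioi (10:ℝ), Real.exp (-(y * τ)) * τ ^ (-α) := by
      rw [← Set.Ioc_union_Ioi_eq_Ioi (by norm_num : (0:ℝ) ≤ 10)]
      exact setIntegral_union Set.Ioc_disjoint_Ioi_same measurableSet_Ioi hIoc
        (intIoi hy (by linarith))
    rw [gammaIdent hα0 hα1 hy] at hsplit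
    have he : -α - ((0:ℕ):ℝ) = -α := by norm_num
    have he2 : ((0:ℕ):ℝ) + α - 1 = α - 1 := by norm_num
    rw [he, he2]
    simp only [hG0]
    linarith [hsplit]
  | succ l ih =>
    obtain ⟨c, g, hg, hfor⟩ := ih
    set q : ℝ := -α - (l:ℝ) with hq_def
    have hq_neg : q < 0 := by
      have : (0:ℝ) ≤ (l:ℝ) := Nat.cast_nonneg l
      simp only [hq_def]; linarith
    have hq_ne : q ≠ 0 := ne_of_lt hq_neg
    refine ⟨c / q, fun y => (-(Real.exp (-(y * 10)) * (10:ℝ) ^ q) + y * g y) / q, ?_, ?_⟩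
    · apply ContDiffOn.div_const
      apply ContDiffOn.add
      · exact (((((contDiff_id.mul contDiff_const).neg).exp).mul contDiff_const).neg).contDiffOn
      · exact contDiffOn_id.mul hg
    · intro y hy
      set φ : ℝ → ℝ := fun τ => Real.exp (-(y * τ)) * τ ^ q / q with hφ_def
      set φ' : ℝ → ℝ := fun τ => Real.exp (-(y * τ)) * τ ^ (q - 1)
        - (y / q) * (Real.exp (-(y * τ)) * τ ^ q) with hφ'_def
      have hderiv : ∀ τ ∈ Set.Ici (10:ℝ), HasDerivAt φ (φ' τ) τ := by
        intro τ hτ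
        rw [mem_Ici] at hτ
        have hτ0 : (0:ℝ) < τ := by linarith
        have h1 : HasDerivAt (fun τ : ℝ => -(y * τ)) (-y) τ := by
          exact (((hasDerivAt_id τ).const_mul y).neg).congr_deriv (by simp)
        have h2 := h1.exp
        have h3 : HasDerivAt (fun τ : ℝ => τ ^ q) (q * τ ^ (q - 1)) τ :=
          Real.hasDerivAt_rpow_const (Or.inl hτ0.ne')
        have h4 := (h2.mul h3).div_const q
        refine h4.congr_deriv ?_
        simp only [hφ'_def]
        field_simp
        ring
      have f'int : IntegrableOn φ' (Set.Ioi (10:ℝ)) := by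
        apply Integrable.sub (intIoi hy (by linarith))
        exact (intIoi hy (le_of_lt hq_neg)).const_mul (y / q)
      have htend : Tendsto φ atTop (𝓝 0) := by
        have h := (tendsto_rpow_mul_exp_neg_mul_atTop_nhds_zero q y hy).div_const q
        rw [zero_div] at h
        apply h.congr
        intro x
        rw [neg_mul]
        ring
      have key := integral_Ioi_of_hasDerivAt_of_tendsto' hderiv f'int htend
      have hsub : (∫ τ in Set.Ioi (10:ℝ), φ' τ)
          = (∫ τ in Set.Ioi (10:ℝ), Real.exp (-(y * τ)) * τ ^ (q - 1))
            - (y / q) * ∫ τ in Set.Ioi (10:ℝ), Real.exp (-(y * τ)) * τ ^ q := by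
        rw [integral_sub (intIoi hy (by linarith))
          ((intIoi hy (le_of_lt hq_neg)).const_mul (y / q)), integral_const_mul]
      have hfy := hfor y hy
      have hexp : -α - ((l+1:ℕ):ℝ) = q - 1 := by push_cast; simp only [hq_def]; ring
      have hexp2 : ((l+1:ℕ):ℝ) + α - 1 = ((l:ℝ) + α - 1) + 1 := by push_cast; ring
      rw [hexp, hexp2, Real.rpow_add hy, Real.rpow_one]
      rw [hsub] at key
      rw [hfy] at key
      have hφ10 : φ 10 = Real.exp (-(y * 10)) * (10:ℝ) ^ q / q := rfl
      rw [hφ10] at key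
      field_simp at key ⊢
      linear_combination key


end Stmt11Aux

/-- For `α ∈ (0,1)` and `l ∈ ℕ`, there are a constant `c` and a function `g`,
infinitely differentiable on `[0,∞)`, such that for all `y > 0`,
`∫_{10}^∞ e^{-yτ} τ^{-α-l} dτ = c y^{l+α-1} + g(y)`. -/
theorem stmt_11 (α : ℝ) (l : ℕ) (hα0 : 0 < α) (hα1 : α < 1) :
    ∃ (c : ℝ) (g : ℝ → ℝ),
      ContDiffOn ℝ (⊤ : ℕ∞) g (Set.Ici 0) ∧
      ∀ y : ℝ, 0 < y →
        (∫ τ in Set.Ioi (10 : ℝ), Real.exp (-(y * τ)) * τ ^ (-α - (l : ℝ)))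
          = c * y ^ ((l : ℝ) + α - 1) + g y :=
  Stmt11Aux.main α hα0 hα1 l
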